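/- For every odd integer t ≥ 3, the graph G(ℤ,{2,t}) admits a (1,1,2,2)-packing coloring, i.e., a map f:ℤ→{1,2,3,4} such that color classes 1 and 2 are independent sets and color classes 3 and 4 are 2-packings. -/

import Mathlib

def distG (t : ℤ) : SimpleGraph ℤ :=
  SimpleGraph.fromRel (fun i j => |i - j| = 2 ∨ |i - j| = t)

def pcol (t i : ℤ) : Fin 4 :=
  if i % (t+2) = (if t % 4 = 1 then t else t + 1) then
    (if i % (2*(t+2)) = (if t % 4 = 1 then t else t + 1) then 2 else 3)
  else if ((i % (t+2)) / 2) % 2 = 0 then 0 else 1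

lemma emod_shift (q x d : ℤ) : (x + d) % q = (x % q + d) % q := by
  conv_lhs => rw [← Int.mul_ediv_add_emod x q]
  rw [show q * (x/q) + x % q + d = (x % q + d) + q * (x/q) by ring,
    Int.add_mul_emod_self_left]

lemma pcol_step (t : ℤ) (ht : Odd t) (h3 : 3 ≤ t) (x d : ℤ) (hd : d = 2 ∨ d = t)
    (h1 : (pcol t x : ℕ) < 2) (h2 : (pcol t (x+d) : ℕ) < 2) :
    pcol t x ≠ pcol t (x + d) := by
  have ht4 : t % 4 = 1 ∨ t % 4 = 3 := by rcases ht with ⟨m, hm⟩; omega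
  have hq : 0 < t + 2 := by omega
  have hs0 := Int.emod_nonneg x (by omega : t + 2 ≠ 0)
  have hs1 := Int.emod_lt_of_pos x hq
  have hv0 := Int.emod_nonneg (x+d) (by omega : t + 2 ≠ 0)
  have hv1 := Int.emod_lt_of_pos (x+d) hq
  have hrel : (x + d) % (t+2) = (x % (t+2) + d) % (t+2) := emod_shift _ _ _
  have hd0 : 0 < d := by rcases hd with rfl|rfl <;> omega
  have hdt : d ≤ t := by rcases hd with rfl|rfl <;> omega
  have hcomp : (x + d) % (t+2) = x % (t+2) + d ∨
      (x + d) % (t+2) = x % (t+2) + d - (t+2) := by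
    by_cases h : x % (t+2) + d < t + 2
    · left; rw [hrel]; apply Int.emod_eq_of_lt <;> omega
    · right
      rw [hrel]
      conv_lhs => rw [show x % (t+2) + d = (x % (t+2) + d - (t+2)) + (t+2) * 1 by ring]
      rw [Int.add_mul_emod_self_left]
      apply Int.emod_eq_of_lt <;> omega
  intro heq
  unfold pcol at h1 h2 heq
  by_cases hse : x % (t+2) = (if t % 4 = 1 then t else t + 1)
  · rw [if_pos hse] at h1; split_ifs at h1 <;> exact absurd h1 (by decide)
  by_cases hse' : (x+d) % (t+2) = (if t % 4 = 1 then t else t + 1)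
  · rw [if_pos hse'] at h2; split_ifs at h2 <;> exact absurd h2 (by decide)
  rw [if_neg hse, if_neg hse'] at heq
  have hflip : ((x % (t+2)) / 2) % 2 ≠ (((x+d) % (t+2)) / 2) % 2 := by
    rcases ht4 with h4 | h4
    · rw [if_pos h4] at hse hse'
      rcases hd with rfl | rfl <;> rcases hcomp with hc | hc <;> omega
    · rw [if_neg (by omega)] at hse hse'
      rcases hd with rfl | rfl <;> rcases hcomp with hc | hc <;> omega
  split_ifs at heq <;> first | (exact absurd heq (by decide)) | omega

lemma adj_iff (t : ℤ) {u v : ℤ} :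
    (distG t).Adj u v ↔ u ≠ v ∧ (|u - v| = 2 ∨ |u - v| = t) := by
  constructor
  · rintro ⟨hne, h | h⟩
    · exact ⟨hne, h⟩
    · rw [abs_sub_comm] at h; exact ⟨hne, h⟩
  · rintro ⟨hne, h⟩; exact ⟨hne, Or.inl h⟩

lemma adj2 (t : ℤ) (x : ℤ) : (distG t).Adj x (x + 2) := by
  rw [adj_iff]
  constructor
  · omega
  · left; rw [show x - (x+2) = -2 by ring]; decide

lemma adjt (t : ℤ) (h3 : 3 ≤ t) (x : ℤ) : (distG t).Adj x (x + t) := by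
  rw [adj_iff]
  refine ⟨by omega, Or.inr ?_⟩
  rw [show x - (x+t) = -t by ring, abs_neg]
  exact abs_of_nonneg (by omega)

lemma reach_even (t : ℤ) (x : ℤ) : ∀ m : ℤ, (distG t).Reachable x (x + 2*m) := by
  intro m
  induction m using Int.induction_on with
  | zero => simpa using SimpleGraph.Reachable.refl x
  | succ k ih =>
      have := (adj2 t (x + 2*k)).reachable
      have h2 : x + 2*(k+1:ℤ) = x + 2*k + 2 := by ring
      rw [h2]
      exact ih.trans this
  | pred k ih =>
      have := ((adj2 t (x + 2*(-k-1:ℤ))).reachable).symm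
      have h2 : x + 2*(-k-1:ℤ) + 2 = x + 2*(-k:ℤ) := by ring
      rw [h2] at this
      exact ih.trans this

lemma reach (t : ℤ) (ht : Odd t) (h3 : 3 ≤ t) (u v : ℤ) : (distG t).Reachable u v := by
  rcases Int.even_or_odd (v - u) with ⟨m, hm⟩ | ⟨m, hm⟩
  · have : v = u + 2*m := by omega
    rw [this]; exact reach_even t u m
  · have hr1 := (adjt t h3 u).reachable
    rcases ht with ⟨n, hn⟩
    have : v = (u + t) + 2*(m - n) := by omega
    rw [this]
    exact hr1.trans (reach_even t (u+t) (m-n))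

lemma walk_bound (t : ℤ) (h3 : 3 ≤ t) {u v : ℤ} (w : (distG t).Walk u v) :
    |u - v| ≤ t * w.length := by
  induction w with
  | nil => simp
  | @cons a b c h p ih =>
      have hab : |a - b| ≤ t := by
        rcases (adj_iff t).mp h with ⟨-, h2 | h2⟩ <;> omega
      have htri : |a - c| ≤ |a - b| + |b - c| := abs_sub_le a b c
      rw [SimpleGraph.Walk.length_cons]
      push_cast
      nlinarith [ih]

lemma pcol_big (t : ℤ) (h3 : 3 ≤ t) (y : ℤ) (h : 2 ≤ (pcol t y : ℕ)) :
    (pcol t y = 2 ∧ y % (2*(t+2)) = (if t % 4 = 1 then t else t+1)) ∨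
    (pcol t y = 3 ∧ y % (2*(t+2)) = (if t % 4 = 1 then t else t+1) + (t+2)) := by
  unfold pcol at h ⊢
  set e := (if t % 4 = 1 then t else t + 1) with he
  have heb : 0 ≤ e ∧ e < t + 2 := by rw [he]; split <;> omega
  by_cases h1 : y % (t+2) = e
  · rw [if_pos h1] at h ⊢
    by_cases h2 : y % (2*(t+2)) = e
    · left; exact ⟨by rw [if_pos h2], h2⟩
    · right; refine ⟨by rw [if_neg h2], ?_⟩
      have hm : (y % (2*(t+2))) % (t+2) = e := by
        rw [Int.emod_emod_of_dvd y ⟨2, by ring⟩, h1]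
      have hb0 := Int.emod_nonneg y (show (2*(t+2)) ≠ 0 by omega)
      have hb1 := Int.emod_lt_of_pos y (show (0:ℤ) < 2*(t+2) by omega)
      set z := y % (2*(t+2)) with hz
      by_cases hzs : z < t+2
      · exfalso; exact h2 (by rw [← hm]; exact (Int.emod_eq_of_lt hb0 hzs).symm)
      · have hzz : z % (t+2) = z - (t+2) := by
          conv_lhs => rw [show z = (z - (t+2)) + (t+2)*1 by ring]
          rw [Int.add_mul_emod_self_left]
          apply Int.emod_eq_of_lt <;> omega
        omega
  · rw [if_neg h1] at h
    split_ifs at h <;> exact absurd h (by decide)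

theorem stmt4 (t : ℤ) (ht : Odd t) (h3 : 3 ≤ t) :
    ∃ f : ℤ → Fin 4, ∀ u v : ℤ, u ≠ v → f u = f v →
      ((f u : ℕ) < 2 → ¬ (distG t).Adj u v) ∧ (2 ≤ (f u : ℕ) → 2 < (distG t).dist u v) := by
  refine ⟨pcol t, fun u v hne hfeq => ⟨?_, ?_⟩⟩
  · intro hlt hadj
    have hlt' : (pcol t v : ℕ) < 2 := by rw [← hfeq]; exact hlt
    rcases (adj_iff t).mp hadj with ⟨-, habs | habs⟩
    · rcases (abs_eq (show (0:ℤ) ≤ 2 by norm_num)).mp habs with h | h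
      · exact pcol_step t ht h3 v 2 (Or.inl rfl) hlt' (by rw [show v + 2 = u by omega]; exact hlt)
          (by rw [show v + 2 = u by omega]; exact hfeq.symm)
      · exact pcol_step t ht h3 u 2 (Or.inl rfl) hlt (by rw [show u + 2 = v by omega]; exact hlt')
          (by rw [show u + 2 = v by omega]; exact hfeq)
    · rcases (abs_eq (show (0:ℤ) ≤ t by omega)).mp habs with h | h
      · exact pcol_step t ht h3 v t (Or.inr rfl) hlt' (by rw [show v + t = u by omega]; exact hlt)
          (by rw [show v + t = u by omega]; exact hfeq.symm)
      · exact pcol_step t ht h3 u t (Or.inr rfl) hlt (by rw [show u + t = v by omega]; exact hlt')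
          (by rw [show u + t = v by omega]; exact hfeq)
  · intro hge
    have hge' : 2 ≤ (pcol t v : ℕ) := by rw [← hfeq]; exact hge
    have hmod : u % (2*(t+2)) = v % (2*(t+2)) := by
      rcases pcol_big t h3 u hge with ⟨hu, hu2⟩ | ⟨hu, hu2⟩ <;>
        rcases pcol_big t h3 v hge' with ⟨hv, hv2⟩ | ⟨hv, hv2⟩
      · rw [hu2, hv2]
      · rw [hu, hv] at hfeq; exact absurd hfeq (by decide)
      · rw [hu, hv] at hfeq; exact absurd hfeq (by decide)
      · rw [hu2, hv2]
    have hdvd : (2*(t+2)) ∣ (v - u) := Int.ModEq.dvd hmod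
    have hbig : 2*(t+2) ≤ |v - u| :=
      Int.le_of_dvd (abs_pos.mpr (sub_ne_zero.mpr (Ne.symm hne))) ((dvd_abs _ _).mpr hdvd)
    by_contra hcon
    push_neg at hcon
    obtain ⟨w, hw⟩ := (reach t ht h3 u v).exists_walk_length_eq_dist
    have hb := walk_bound t h3 w
    rw [hw] at hb
    have : (t : ℤ) * ((distG t).dist u v : ℕ) ≤ t * 2 := by
      apply mul_le_mul_of_nonneg_left _ (by omega : (0:ℤ) ≤ t)
      exact_mod_cast hcon
    rw [abs_sub_comm] at hb
    omega
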